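/- In the C major tonality, the cadential sets k₁ = {II, V}, k₂ = {II, III}, k₃ = {III, IV}, k₄ = {IV, V}, and k₅ = {VII} are cadences: each set of triads occurs in exactly one major tonality (no transposition of the C major scale contains all the triads of the set), and each is minimal with this property. -/
import Mathlib


/-- The major scale with tonic t, as a function from scale degrees. -/
def majorScale (t : ZMod 12) : Fin 7 → ZMod 12 :=
  fun i => t + ![0, 2, 4, 5, 7, 9, 11] i

/-- The triad on degree i of the major tonality with tonic t. -/
def triad (t : ZMod 12) (i : Fin 7) : Set (ZMod 12) :=
  {majorScale t i, majorScale t (i + 2), majorScale t (i + 4)}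

/-- The major tonality with tonic t: the set of its seven degree triads. -/
def tonality (t : ZMod 12) : Set (Set (ZMod 12)) := Set.range (triad t)

/-- A cadential set for C major: a set of triads of C contained in no other
major tonality. -/
def IsCadentialSet (S : Set (Set (ZMod 12))) : Prop :=
  S ⊆ tonality 0 ∧ ∀ t : ZMod 12, S ⊆ tonality t → t = 0

/-- A cadence: a minimal cadential set. -/
def IsCadence (S : Set (Set (ZMod 12))) : Prop :=
  IsCadentialSet S ∧ ∀ S' ⊂ S, ¬ IsCadentialSet S'

/-- Finset version of a triad. -/
def triadF (t : ZMod 12) (i : Fin 7) : Finset (ZMod 12) :=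
  {majorScale t i, majorScale t (i + 2), majorScale t (i + 4)}

lemma coe_triadF (t : ZMod 12) (i : Fin 7) : (triadF t i : Set (ZMod 12)) = triad t i := by
  simp [triadF, triad]

lemma triad_eq_iff (t t' : ZMod 12) (i j : Fin 7) :
    triad t i = triad t' j ↔ triadF t i = triadF t' j := by
  rw [← coe_triadF, ← coe_triadF, Finset.coe_inj]

lemma mem_tonality (t t' : ZMod 12) (j : Fin 7) :
    triad t' j ∈ tonality t ↔ ∃ i, triadF t i = triadF t' j := by
  simp only [tonality, Set.mem_range, triad_eq_iff]

lemma not_cad_subset {A : Set (ZMod 12)} {t₀ : ZMod 12} (ht : t₀ ≠ 0)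
    (hA : A ∈ tonality t₀) {S' : Set (Set (ZMod 12))} (hS : S' ⊆ {A}) :
    ¬ IsCadentialSet S' := fun h =>
  ht (h.2 t₀ (hS.trans (Set.singleton_subset_iff.mpr hA)))

lemma pair_cadence (a b : Fin 7)
    (h0 : ∀ t : ZMod 12, (∃ i, triadF t i = triadF 0 a) →
      (∃ i, triadF t i = triadF 0 b) → t = 0)
    {ta tb : ZMod 12} (hta : ta ≠ 0) (htb : tb ≠ 0)
    (ha : triad 0 a ∈ tonality ta) (hb : triad 0 b ∈ tonality tb) :
    IsCadence {triad 0 a, triad 0 b} := by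
  constructor
  · constructor
    · intro x hx
      rcases hx with h | h
      · exact h ▸ ⟨a, rfl⟩
      · exact h ▸ ⟨b, rfl⟩
    · intro t hsub
      have h1 : triad 0 a ∈ tonality t := hsub (Set.mem_insert _ _)
      have h2 : triad 0 b ∈ tonality t :=
        hsub (Set.mem_insert_of_mem _ (Set.mem_singleton _))
      exact h0 t ((mem_tonality t 0 a).mp h1) ((mem_tonality t 0 b).mp h2)
  · intro S' hss
    by_cases hA : triad 0 a ∈ S'
    · by_cases hB : triad 0 b ∈ S'
      · exact absurd (fun x hx => by rcases hx with h | h <;> exact h ▸ ‹_›) hss.2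
      · refine not_cad_subset hta ha (fun x hx => ?_)
        rcases hss.1 hx with h | h
        · exact h
        · exact absurd (h ▸ hx) hB
    · refine not_cad_subset htb hb (fun x hx => ?_)
      rcases hss.1 hx with h | h
      · exact absurd (h ▸ hx) hA
      · exact h

/-- k₁ = {II,V}, k₂ = {II,III}, k₃ = {III,IV}, k₄ = {IV,V}, k₅ = {VII}
are cadences of C major. -/
theorem cadences_of_C_major :
    IsCadence {triad 0 1, triad 0 4} ∧
    IsCadence {triad 0 1, triad 0 2} ∧
    IsCadence {triad 0 2, triad 0 3} ∧
    IsCadence {triad 0 3, triad 0 4} ∧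
    IsCadence {triad 0 6} := by
  have m1 : triad 0 1 ∈ tonality 5 := (mem_tonality 5 0 1).mpr (by decide)
  have m2 : triad 0 2 ∈ tonality 7 := (mem_tonality 7 0 2).mpr (by decide)
  have m3 : triad 0 3 ∈ tonality 5 := (mem_tonality 5 0 3).mpr (by decide)
  have m4 : triad 0 4 ∈ tonality 7 := (mem_tonality 7 0 4).mpr (by decide)
  have h5 : (5 : ZMod 12) ≠ 0 := by decide
  have h7 : (7 : ZMod 12) ≠ 0 := by decide
  refine ⟨?_, ?_, ?_, ?_, ?_⟩
  · exact pair_cadence 1 4 (by decide) h5 h7 m1 m4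
  · exact pair_cadence 1 2 (by decide) h5 h7 m1 m2
  · exact pair_cadence 2 3 (by decide) h7 h5 m2 m3
  · exact pair_cadence 3 4 (by decide) h5 h7 m3 m4
  · constructor
    · constructor
      · intro x hx
        exact (Set.mem_singleton_iff.mp hx) ▸ ⟨6, rfl⟩
      · intro t hsub
        have h1 : triad 0 6 ∈ tonality t := hsub rfl
        have key : ∀ t : ZMod 12, (∃ i, triadF t i = triadF 0 6) → t = 0 := by decide
        exact key t ((mem_tonality t 0 6).mp h1)
    · intro S' hss
      have m10 : triad 1 0 ∈ tonality 1 := ⟨0, rfl⟩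
      refine not_cad_subset (t₀ := 1) (by decide) m10 (fun x hx => ?_)
      have hA : triad 0 6 ∉ S' := fun h =>
        hss.2 (fun y hy => (Set.mem_singleton_iff.mp hy) ▸ h)
      exact absurd ((Set.mem_singleton_iff.mp (hss.1 hx)) ▸ hx) hA
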